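/- Let α > 2, n ≥ 3, P > 0. If R = 80·(256/(α−2))^{1/(α−2)}·(log n)^{α/(2(α−2))}, then P·(80√(log n))^{−α} / (P·R^{2−α}/(25(α−2)·log n)) ≥ log n; i.e., the SINR at a receiver at distance at most 80√(log n) from its transmitter with total interference at most P·R^{2−α}/(25(α−2) log n) is at least log n. -/

import Mathlib

theorem stmt_17 (α n P R : ℝ) (hα : 2 < α) (hn : 3 ≤ n) (hP : 0 < P)
    (hR : R = 80 * (256 / (α - 2)) ^ (1 / (α - 2)) *
        Real.log n ^ (α / (2 * (α - 2)))) :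
    P * (80 * Real.sqrt (Real.log n)) ^ (-α) /
        (P * R ^ (2 - α) / (25 * (α - 2) * Real.log n)) ≥ Real.log n := by
  set L := Real.log n with hLdef
  have hL : 0 < L := Real.log_pos (by linarith)
  have ha : 0 < α - 2 := by linarith
  have hC : (0:ℝ) < 256 / (α - 2) := by positivity
  -- rewrite (80 * √L)^(-α)
  have h1 : (80 * Real.sqrt L) ^ (-α) = 80 ^ (-α) * L ^ (-(α/2)) := by
    rw [Real.mul_rpow (by norm_num) (Real.sqrt_nonneg _), Real.sqrt_eq_rpow,
      ← Real.rpow_mul hL.le]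
    ring_nf
  -- rewrite R^(2-α)
  have h2 : R ^ (2 - α) = 80 ^ (2 - α) * ((α - 2) / 256) * L ^ (-(α/2)) := by
    rw [hR, Real.mul_rpow (by positivity) (by positivity),
      Real.mul_rpow (by norm_num) (by positivity),
      ← Real.rpow_mul hC.le, ← Real.rpow_mul hL.le]
    have e1 : 1 / (α - 2) * (2 - α) = -1 := by field_simp; ring
    have e2 : α / (2 * (α - 2)) * (2 - α) = -(α / 2) := by field_simp; ring
    rw [e1, e2, Real.rpow_neg_one, inv_div]
  rw [h1, h2]
  have h80 : (80:ℝ) ^ (2 - α) = 6400 * 80 ^ (-α) := by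
    rw [show (2:ℝ) - α = 2 + (-α) by ring, Real.rpow_add (by norm_num),
      show ((2:ℝ):ℝ) = ((2:ℕ):ℝ) by norm_num, Real.rpow_natCast]
    norm_num
  rw [h80]
  have hX : L ^ (-(α/2)) ≠ 0 := (Real.rpow_pos_of_pos hL _).ne'
  have hY : (80:ℝ) ^ (-α) ≠ 0 := (Real.rpow_pos_of_pos (by norm_num) _).ne'
  have : P * (80 ^ (-α) * L ^ (-(α/2))) /
      (P * (6400 * 80 ^ (-α) * ((α - 2) / 256) * L ^ (-(α/2))) / (25 * (α - 2) * L)) = L := by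
    field_simp
    ring
  rw [this]
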